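/- Let k be a field, let φ : H → H̄ be a surjective homomorphism of finite groups, let K̄ be a subgroup of H̄, and let K = φ⁻¹(K̄). Regard k[K̄] as a k[K]-module via the restriction of φ to K. Then the canonical map k[H] ⊗_{k[K]} k[K̄] → k[H̄], given by h ⊗ x ↦ φ(h)·x, is an isomorphism of left k[H]-modules (where k[H̄] is a k[H]-module via φ). -/

import Mathlib

open TensorProduct

/-- An isomorphism of `k[G]`-modules: a `G`-equivariant `k`-linear equivalence
between the underlying spaces of two representations of `G` over `k`. -/
def RepIso {k G V W : Type*} [Field k] [Group G]
    [AddCommGroup V] [Module k V] [AddCommGroup W] [Module k W]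
    (ρ : Representation k G V) (τ : Representation k G W) : Prop :=
  ∃ e : V ≃ₗ[k] W, ∀ (g : G) (v : V), e (ρ g v) = τ g (e v)

/-- The (left) regular representation of `H` on the group algebra `k[H]`,
given by left multiplication. -/
noncomputable def regRep (k : Type*) [Field k] (H : Type*) [Group H] :
    Representation k H (MonoidAlgebra k H) :=
  Representation.ofMulAction k H H

lemma regRep_single {k : Type*} [Field k] {H : Type*} [Group H] (h x : H) (r : k) :
    regRep k H h (MonoidAlgebra.single x r) = MonoidAlgebra.single (h * x) r :=
  Representation.ofMulAction_single h x r

section Ind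

variable (k : Type*) [Field k] {H : Type*} [Group H] (K : Subgroup H)
  {M : Type*} [AddCommGroup M] [Module k M] (ρ : Representation k K M)

/-- The submodule of relations defining `k[H] ⊗_{k[K]} M` as a quotient of
`k[H] ⊗_k M`: it is generated by the elements `(h·c) ⊗ m - h ⊗ (c·m)`
for `h ∈ H`, `c ∈ K`, `m ∈ M`. -/
noncomputable def indRel : Submodule k (MonoidAlgebra k H ⊗[k] M) :=
  Submodule.span k {v | ∃ (h : H) (c : K) (m : M),
    v = MonoidAlgebra.single (h * (c : H)) (1 : k) ⊗ₜ[k] m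
      - MonoidAlgebra.single h (1 : k) ⊗ₜ[k] (ρ c m)}

/-- The underlying space of the induced module `Ind_K^H M := k[H] ⊗_{k[K]} M`,
realized as the quotient of `k[H] ⊗_k M` by the relations `(h·c) ⊗ m = h ⊗ (c·m)`. -/
abbrev IndV := (MonoidAlgebra k H ⊗[k] M) ⧸ indRel k K ρ

noncomputable instance IndV.instAddCommMonoid : AddCommMonoid (IndV k K ρ) :=
  AddCommGroup.toAddCommMonoid

lemma indRel_le (h : H) :
    indRel k K ρ ≤ (indRel k K ρ).comap
      (((regRep k H).tprod (Representation.trivial k (G := H) (V := M))) h) := by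
  rw [indRel, Submodule.span_le]
  rintro v ⟨h', c, m, rfl⟩
  simp only [SetLike.mem_coe, Submodule.mem_comap, map_sub, Representation.tprod_apply,
    TensorProduct.map_tmul, regRep_single, Representation.trivial_apply]
  apply Submodule.subset_span
  exact ⟨h * h', c, m, by rw [mul_assoc]⟩

/-- The induced representation `Ind_K^H M := k[H] ⊗_{k[K]} M` of `H`, where `H` acts
through left multiplication on the group algebra factor `k[H]`. -/
noncomputable def ind : Representation k H (IndV k K ρ) where
  toFun h := Submodule.mapQ _ _
    (((regRep k H).tprod (Representation.trivial k (G := H) (V := M))) h)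
    (indRel_le k K ρ h)
  map_one' := by
    apply Submodule.linearMap_qext
    ext x
    simp [Submodule.mapQ_apply]
  map_mul' g h := by
    apply Submodule.linearMap_qext
    ext x
    simp [Submodule.mapQ_apply]

end Ind

section Aux

variable {k : Type*} [Field k]

/-- The subrepresentation of a representation on an invariant submodule. -/
noncomputable def subRep {G M : Type*} [Group G] [AddCommGroup M] [Module k M]
    (ρ : Representation k G M) (p : Submodule k M)
    (hp : ∀ (g : G), ∀ x ∈ p, ρ g x ∈ p) : Representation k G p where
  toFun g := (ρ g).restrict (hp g)
  map_one' := by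
    ext x
    simp [LinearMap.restrict_apply]
  map_mul' g h := by
    ext x
    simp [LinearMap.restrict_apply]

/-- The direct sum of a family of representations. -/
noncomputable def repPi {G : Type*} [Group G] {ι : Type*} {V : ι → Type*}
    [∀ i, AddCommGroup (V i)] [∀ i, Module k (V i)]
    (ρ : ∀ i, Representation k G (V i)) : Representation k G (∀ i, V i) where
  toFun g := LinearMap.pi fun i => (ρ i g).comp (LinearMap.proj i)
  map_one' := by
    ext x i
    simp
  map_mul' g h := by
    ext x i
    simp

/-- The direct sum of `n` copies of a representation. -/
noncomputable def repPow {G V : Type*} [Group G] [AddCommGroup V] [Module k V]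
    (ρ : Representation k G V) (n : ℕ) : Representation k G (Fin n → V) :=
  repPi fun _ => ρ

/-- The direct sum of two representations. -/
noncomputable def repProd {G V W : Type*} [Group G] [AddCommGroup V] [Module k V]
    [AddCommGroup W] [Module k W]
    (ρ : Representation k G V) (τ : Representation k G W) :
    Representation k G (V × W) where
  toFun g := (ρ g).prodMap (τ g)
  map_one' := by ext x <;> simp
  map_mul' g h := by ext x <;> simp

/-- The one-dimensional representation attached to a character `χ : G →* kˣ`. -/
noncomputable def charRep {G : Type*} [Group G] (χ : G →* kˣ) : Representation k G k where
  toFun g := (χ g : k) • LinearMap.id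
  map_one' := by
    simp only [map_one, Units.val_one, one_smul]
    rfl
  map_mul' g h := by
    apply LinearMap.ext
    intro x
    simp [mul_assoc]
    ring

/-- The stabilizer of `i ∈ {1, …, n}` for an action of `G` on `Fin n` given by
a homomorphism to the permutation group. -/
def permStab {G : Type*} [Group G] {n : ℕ} (a : G →* Equiv.Perm (Fin n)) (i : Fin n) :
    Subgroup G where
  carrier := {g | a g i = i}
  one_mem' := by simp
  mul_mem' := by
    intro x y hx hy
    simp only [Set.mem_setOf_eq, map_mul] at *
    rw [Equiv.Perm.mul_apply, hy, hx]
  inv_mem' := by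
    intro x hx
    simp only [Set.mem_setOf_eq] at *
    conv_lhs => rw [← hx]
    rw [map_inv]
    simp

end Aux

section CanMap

variable (k : Type*) [Field k] {G M : Type*} [Group G] [AddCommGroup M] [Module k M]

/-- The canonical map `Ind_K^G p = k[G] ⊗_{k[K]} p → M`, `g ⊗ x ↦ g·x`, defined for a
`K`-invariant submodule `p` of a `G`-module `M`. -/
noncomputable def indToMod (ρ : Representation k G M) (K : Subgroup G) (p : Submodule k M)
    (hp : ∀ (c : ↥K), ∀ x ∈ p, (ρ.comp K.subtype) c x ∈ p) :
    IndV k K (subRep (ρ.comp K.subtype) p hp) →ₗ[k] M :=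
  Submodule.liftQ _
    (TensorProduct.lift
      ((LinearMap.lcomp k M p.subtype).comp ρ.asAlgebraHom.toLinearMap))
    (by
      rw [indRel, Submodule.span_le]
      rintro v ⟨h, c, m, rfl⟩
      simp only [SetLike.mem_coe, LinearMap.mem_ker, map_sub, TensorProduct.lift.tmul,
        LinearMap.coe_comp, Function.comp_apply, AlgHom.toLinearMap_apply,
        Representation.asAlgebraHom_single, one_smul,
        LinearMap.lcomp_apply, subRep, MonoidHom.coe_mk, OneHom.coe_mk,
        LinearMap.restrict_coe_apply, MonoidHom.coe_comp, Subgroup.coe_subtype,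
        map_mul, Module.End.mul_apply, Submodule.coe_subtype, sub_eq_zero])

end CanMap

section Stmt6

variable (k : Type*) [Field k] {H H' : Type*} [Group H] [Group H']

lemma regRep_eq_single_mul {G : Type*} [Group G] (g : G) (x : MonoidAlgebra k G) :
    regRep k G g x = MonoidAlgebra.single g 1 * x := by
  induction x using MonoidAlgebra.induction_linear with
  | zero => simp
  | add f₁ f₂ h₁ h₂ => rw [map_add, mul_add, h₁, h₂]
  | single a b =>
    rw [regRep_single, MonoidAlgebra.single_mul_single, one_mul]

lemma mapDomainAlgHom_single' {G G' : Type*} [Group G] [Group G'] (f : G →* G')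
    (a : G) (b : k) :
    MonoidAlgebra.mapDomainAlgHom k k f (MonoidAlgebra.single a b)
      = MonoidAlgebra.single (f a) b := by
  simp

/-- The `k`-bilinear map `k[H] × k[K'] → k[H']`, `(y, x) ↦ φ(y)·x`, extending
`(h, c) ↦ φ(h)·c` for `h ∈ H` and `c ∈ K' ≤ H'`. -/
noncomputable def canBil (φ : H →* H') (K' : Subgroup H') :
    MonoidAlgebra k H →ₗ[k] MonoidAlgebra k (↥K') →ₗ[k] MonoidAlgebra k H' :=
  LinearMap.mk₂ k
    (fun y x => (MonoidAlgebra.mapDomainAlgHom k k φ y)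
      * (MonoidAlgebra.mapDomainAlgHom k k K'.subtype x))
    (fun y₁ y₂ x => by simp only [map_add, add_mul])
    (fun c y x => by simp only [map_smul, smul_mul_assoc])
    (fun y x₁ x₂ => by simp only [map_add, mul_add])
    (fun c y x => by simp only [map_smul, mul_smul_comm])

/-- The representation of `K = φ⁻¹(K')` on the group algebra `k[K']`, obtained by
restricting the regular representation of `K'` along `φ|_K : K → K'`. -/
noncomputable def resReg (φ : H →* H') (K' : Subgroup H') :
    Representation k (↥(K'.comap φ)) (MonoidAlgebra k (↥K')) :=
  (regRep k (↥K')).comp ((φ.domRestrict (K'.comap φ)).codRestrict K' fun x => x.2)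

/-- The canonical map `k[H] ⊗_{k[K]} k[K'] → k[H']`, `h ⊗ x ↦ φ(h)·x`, where
`K = φ⁻¹(K')` and `k[H']` is a `k[H]`-module via `φ`. -/
noncomputable def canMap (φ : H →* H') (K' : Subgroup H') :
    IndV k (K'.comap φ) (resReg k φ K') →ₗ[k] MonoidAlgebra k H' :=
  Submodule.liftQ _ (TensorProduct.lift (canBil k φ K')) (by
    rw [indRel, Submodule.span_le]
    rintro v ⟨h, c, m, rfl⟩
    simp only [SetLike.mem_coe, LinearMap.mem_ker, map_sub, TensorProduct.lift.tmul,
      canBil, LinearMap.mk₂_apply, sub_eq_zero, resReg, MonoidHom.coe_comp,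
      Function.comp_apply, regRep_eq_single_mul, mapDomainAlgHom_single',
      MonoidHom.codRestrict_apply, MonoidHom.domRestrict_apply, Subgroup.coe_subtype, map_mul]
    rw [← mul_assoc, MonoidAlgebra.single_mul_single, one_mul]
    rfl)

lemma mk_rel (φ : H →* H') (K' : Subgroup H')
    (h : H) (c : ↥(K'.comap φ)) (m : MonoidAlgebra k ↥K') :
    (Submodule.Quotient.mk (p := indRel k (K'.comap φ) (resReg k φ K'))
        (MonoidAlgebra.single (h * (c : H)) (1 : k) ⊗ₜ[k] m))
      = Submodule.Quotient.mk
        (MonoidAlgebra.single h (1 : k) ⊗ₜ[k] (resReg k φ K' c m)) := by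
  rw [Submodule.Quotient.eq]
  exact Submodule.subset_span ⟨h, c, m, rfl⟩

lemma mk_move (φ : H →* H') (K' : Subgroup H') (g h : H) (x' : ↥K') (r : k)
    (hg : φ g = φ h * (x' : H')) :
    (Submodule.Quotient.mk (p := indRel k (K'.comap φ) (resReg k φ K'))
        (MonoidAlgebra.single g (1 : k) ⊗ₜ[k] MonoidAlgebra.single (1 : ↥K') r))
      = Submodule.Quotient.mk
        (MonoidAlgebra.single h (1 : k) ⊗ₜ[k] MonoidAlgebra.single x' r) := by
  have hc : h⁻¹ * g ∈ K'.comap φ := by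
    simp only [Subgroup.mem_comap, map_mul, map_inv, hg, ← mul_assoc, inv_mul_cancel,
      one_mul]
    exact x'.2
  have hgh : g = h * ((⟨h⁻¹ * g, hc⟩ : ↥(K'.comap φ)) : H) := by
    simp [← mul_assoc]
  rw [hgh, mk_rel]
  congr 2
  rw [resReg]
  simp only [MonoidHom.comp_apply, regRep_single]
  congr 1
  ext
  show φ (h⁻¹ * g) * 1 = (x' : H')
  rw [mul_one, map_mul, map_inv, hg, ← mul_assoc, inv_mul_cancel, one_mul]

/-- The inverse of the canonical map, sending `h' ↦ g ⊗ 1` for a chosen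
preimage `g` of `h'` under `φ`. -/
noncomputable def canInv (φ : H →* H') (hφ : Function.Surjective φ) (K' : Subgroup H') :
    MonoidAlgebra k H' →ₗ[k] IndV k (K'.comap φ) (resReg k φ K') :=
  (Finsupp.lift _ k H' fun h' => Submodule.Quotient.mk
    (MonoidAlgebra.single (hφ h').choose (1 : k)
      ⊗ₜ[k] MonoidAlgebra.single (1 : ↥K') (1 : k))) ∘ₗ
    (MonoidAlgebra.coeffLinearEquiv k).toLinearMap

lemma canInv_single (φ : H →* H') (hφ : Function.Surjective φ) (K' : Subgroup H')
    (h' : H') (r : k) :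
    canInv k φ hφ K' (MonoidAlgebra.single h' r)
      = r • Submodule.Quotient.mk
        (MonoidAlgebra.single (hφ h').choose (1 : k)
          ⊗ₜ[k] MonoidAlgebra.single (1 : ↥K') (1 : k)) := by
  rw [canInv, LinearMap.comp_apply, LinearEquiv.coe_coe, MonoidAlgebra.coeffLinearEquiv_apply,
    MonoidAlgebra.coeff_single]
  erw [Finsupp.lift_apply]
  rw [Finsupp.sum_single_index (by simp)]

lemma canMap_mk (φ : H →* H') (K' : Subgroup H') (y : MonoidAlgebra k H)
    (x : MonoidAlgebra k ↥K') :
    canMap k φ K' (Submodule.Quotient.mk (y ⊗ₜ[k] x))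
      = (MonoidAlgebra.mapDomainAlgHom k k φ y)
        * (MonoidAlgebra.mapDomainAlgHom k k K'.subtype x) := by
  rw [canMap, Submodule.liftQ_apply, TensorProduct.lift.tmul, canBil, LinearMap.mk₂_apply]

/-- Let `φ : H → H'` be a surjective homomorphism of finite groups,
`K'` a subgroup of `H'`, and `K = φ⁻¹(K')`. Regard `k[K']` as a `k[K]`-module via the
restriction of `φ` to `K`. Then the canonical map `k[H] ⊗_{k[K]} k[K'] → k[H']`,
`h ⊗ x ↦ φ(h)·x`, is an isomorphism of left `k[H]`-modules (where `k[H']` is a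
`k[H]`-module via `φ`): it is bijective and `H`-equivariant. -/
theorem canMap_bijective_equivariant [Finite H] [Finite H']
    (φ : H →* H') (hφ : Function.Surjective φ) (K' : Subgroup H') :
    Function.Bijective (canMap k φ K') ∧
      ∀ (h : H) (v : IndV k (K'.comap φ) (resReg k φ K')),
        canMap k φ K' (ind k (K'.comap φ) (resReg k φ K') h v)
          = ((regRep k H').comp φ) h (canMap k φ K' v) := by
  constructor
  · rw [Function.bijective_iff_has_inverse]
    refine ⟨canInv k φ hφ K', ?_, ?_⟩
    · -- left inverse : canInv ∘ canMap = id
      intro v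
      obtain ⟨t, rfl⟩ := Submodule.Quotient.mk_surjective _ v
      show canInv k φ hφ K' (canMap k φ K' (Submodule.Quotient.mk t))
        = Submodule.Quotient.mk t
      induction t with
      | zero => simp
      | add a b ha hb =>
        rw [Submodule.Quotient.mk_add, map_add, map_add, ha, hb]
      | tmul y x =>
        induction y using MonoidAlgebra.induction_linear with
        | zero => simp [TensorProduct.zero_tmul]
        | add f₁ f₂ h₁ h₂ =>
          rw [TensorProduct.add_tmul, Submodule.Quotient.mk_add, map_add, map_add, h₁, h₂]
        | single a b =>
          induction x using MonoidAlgebra.induction_linear with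
          | zero => simp [TensorProduct.tmul_zero]
          | add g₁ g₂ h₁ h₂ =>
            rw [TensorProduct.tmul_add, Submodule.Quotient.mk_add, map_add, map_add, h₁, h₂]
          | single c d =>
            rw [canMap_mk]
            show canInv k φ hφ K'
              (MonoidAlgebra.mapDomainAlgHom k k φ (MonoidAlgebra.single a b)
                * MonoidAlgebra.mapDomainAlgHom k k K'.subtype (MonoidAlgebra.single c d)) = _
            rw [mapDomainAlgHom_single', mapDomainAlgHom_single',
              MonoidAlgebra.single_mul_single, canInv_single]
            have hspec := (hφ (φ a * K'.subtype c)).choose_spec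
            rw [mk_move k φ K' _ a c (1 : k) hspec, ← Submodule.Quotient.mk_smul]
            congr 1
            rw [mul_smul, TensorProduct.smul_tmul', TensorProduct.smul_tmul,
              TensorProduct.smul_tmul', MonoidAlgebra.smul_single, MonoidAlgebra.smul_single,
              smul_eq_mul, smul_eq_mul, mul_one, mul_one]
    · -- right inverse : canMap ∘ canInv = id
      intro x
      induction x using MonoidAlgebra.induction_linear with
      | zero => simp
      | add f₁ f₂ h₁ h₂ => rw [map_add, map_add, h₁, h₂]
      | single a b =>
        rw [canInv_single, map_smul, canMap_mk, mapDomainAlgHom_single',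
          mapDomainAlgHom_single', (hφ a).choose_spec, MonoidAlgebra.single_mul_single,
          Subgroup.coe_subtype, OneMemClass.coe_one, mul_one, mul_one,
          MonoidAlgebra.smul_single, smul_eq_mul, mul_one]
  · intro h v
    obtain ⟨t, rfl⟩ := Submodule.Quotient.mk_surjective _ v
    rw [ind]
    show canMap k φ K' (Submodule.mapQ _ _ _ (indRel_le k (K'.comap φ) (resReg k φ K') h)
      (Submodule.Quotient.mk t)) = _
    rw [Submodule.mapQ_apply]
    induction t with
    | zero => simp
    | add a b ha hb =>
      rw [map_add, Submodule.Quotient.mk_add, map_add, ha, hb, Submodule.Quotient.mk_add,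
        map_add, map_add]
    | tmul y x =>
      rw [Representation.tprod_apply, TensorProduct.map_tmul, canMap_mk,
        canMap_mk]
      rw [MonoidHom.comp_apply, regRep_eq_single_mul, regRep_eq_single_mul]
      rw [map_mul]
      rw [mapDomainAlgHom_single', mul_assoc]
      simp [Representation.trivial_apply]

end Stmt6
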